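/- Let d, d' ≥ 1 and let h : ℝ^d → ℝ^{d'} be continuous and injective. Let μ, ν be Borel probability measures on the unit sphere 𝕊^d ⊂ ℝ^{d+1} with μ({s_n}) = ν({s_n}) = 0, where s_n is the north pole. Extend the stereographic projection φ(s) = s[1:d]/(1 − s_{d+1}) to all of 𝕊^d by setting φ(s_n) = 0. If for every unit vector θ ∈ ℝ^{d'} the pushforward measures of μ and ν under the map s ↦ ⟨h(φ(s)), θ⟩ coincide (as measures on ℝ), then μ = ν. (This is the identifiability underlying the fact that S3W_{H,p} is a metric on probability measures on 𝕊^d ∖ {s_n}: if all one-dimensional slices of the stereographic spherical Radon transform S_H agree, the measures agree.) -/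

import Mathlib

open Real
open scoped RealInnerProductSpace

noncomputable section

/-- The first `d` coordinates of a point of `ℝ^{d+1}`, i.e. `s[1:d]`. -/
def stereoProj {d : ℕ} (s : EuclideanSpace ℝ (Fin (d + 1))) : EuclideanSpace ℝ (Fin d) :=
  WithLp.toLp 2 (fun i => s (Fin.castSucc i))

/-- The stereographic projection `φ(s) = s[1:d] / (1 - s_{d+1})`. -/
def stereo {d : ℕ} (s : EuclideanSpace ℝ (Fin (d + 1))) : EuclideanSpace ℝ (Fin d) :=
  (1 - s (Fin.last d))⁻¹ • stereoProj s

open Classical in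
/-- The map `h₁(x) = arccos((1 - ‖x‖²)/(1 + ‖x‖²)) • x/‖x‖` for `x ≠ 0`, `h₁(0) = 0`. -/
def h1 {d : ℕ} (x : EuclideanSpace ℝ (Fin d)) : EuclideanSpace ℝ (Fin d) :=
  if x = 0 then 0 else Real.arccos ((1 - ‖x‖ ^ 2) / (1 + ‖x‖ ^ 2)) • ‖x‖⁻¹ • x

/-- The north pole `s_n = (0, …, 0, 1)` of `𝕊^d ⊂ ℝ^{d+1}`. -/
def northPole (d : ℕ) : EuclideanSpace ℝ (Fin (d + 1)) :=
  EuclideanSpace.single (Fin.last d) 1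

/-- The south pole `s₀ = (0, …, 0, -1)` of `𝕊^d ⊂ ℝ^{d+1}`. -/
def southPole (d : ℕ) : EuclideanSpace ℝ (Fin (d + 1)) :=
  EuclideanSpace.single (Fin.last d) (-1)

end

open MeasureTheory

open Classical in
/-- The stereographic projection extended to all of `𝕊^d` by `φ(s_n) = 0`. -/
noncomputable def stereoExt {d : ℕ} (s : EuclideanSpace ℝ (Fin (d + 1))) : EuclideanSpace ℝ (Fin d) :=
  if s = northPole d then 0 else stereo s


open MeasureTheory Complex Filter
open scoped FourierTransform SchwartzMap ContDiff Topology

section CramerWold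

variable {n : ℕ}

local notation "EucSp" => EuclideanSpace ℝ (Fin n)

/-- Build a Schwartz map from a smooth compactly supported function. -/
noncomputable def toSchwartz (f : EucSp → ℂ) (hsm : ContDiff ℝ ∞ f) (hsupp : HasCompactSupport f) :
    𝓢(EucSp, ℂ) where
  toFun := f
  smooth' := hsm
  decay' := by
    intro k m
    have hcont : Continuous fun x : EucSp => ‖x‖ ^ k * ‖iteratedFDeriv ℝ m f x‖ :=
      ((continuous_norm.pow k).mul ((hsm.continuous_iteratedFDeriv (by exact_mod_cast le_top)).norm))
    have hcs : HasCompactSupport fun x : EucSp => ‖x‖ ^ k * ‖iteratedFDeriv ℝ m f x‖ :=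
      ((hsupp.iteratedFDeriv m).norm).mul_left
    obtain ⟨C, hC⟩ := hcs.exists_bound_of_continuous hcont
    refine ⟨C, fun x => le_trans (le_abs_self _) ?_⟩
    have := hC x
    rwa [Real.norm_eq_abs] at this
    
lemma integral_schwartz_eq (μ ν : Measure EucSp) [IsFiniteMeasure μ] [IsFiniteMeasure ν]
    (hchar : ∀ w : EucSp, ∫ x, ((𝐞 ⟪w, x⟫ : Circle) : ℂ) ∂μ = ∫ x, ((𝐞 ⟪w, x⟫ : Circle) : ℂ) ∂ν)
    (f : 𝓢(EucSp, ℂ)) : ∫ x, f x ∂μ = ∫ x, f x ∂ν := by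
  set g : 𝓢(EucSp, ℂ) := SchwartzMap.fourierTransformCLM ℂ f with hg
  have hinv : ∀ x : EucSp, f x = ∫ w : EucSp, ((𝐞 ⟪w, x⟫ : Circle) : ℂ) * g w := by
    intro x
    have h1 : 𝓕⁻ (𝓕 (f : EucSp → ℂ)) x = f x :=
      MeasureTheory.Integrable.fourierInv_fourier_eq (f.integrable (μ := volume)) (by exact g.integrable)
        f.continuous.continuousAt
    have h2 : 𝓕⁻ (𝓕 (f : EucSp → ℂ)) x = ∫ w : EucSp, (𝐞 ⟪w, x⟫ : Circle) • (g w : ℂ) := by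
      rw [Real.fourierInv_eq]
      rfl
    rw [← h1, h2]
    simp [Circle.smul_def]
  have hcont : Continuous fun p : EucSp × EucSp => ((𝐞 ⟪p.2, p.1⟫ : Circle) : ℂ) * g p.2 := by
    refine Continuous.mul ?_ (g.continuous.comp continuous_snd)
    exact continuous_subtype_val.comp
      (Real.continuous_fourierChar.comp (continuous_snd.inner continuous_fst))
  have hint : ∀ (ρ : Measure EucSp), ∀ _ : IsFiniteMeasure ρ,
      Integrable (fun p : EucSp × EucSp => ((𝐞 ⟪p.2, p.1⟫ : Circle) : ℂ) * g p.2) (ρ.prod volume) := by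
    intro ρ hρ
    rw [integrable_prod_iff hcont.aestronglyMeasurable]
    constructor
    · refine Filter.Eventually.of_forall fun x => ?_
      refine (g.integrable).bdd_mul (c := 1) ?_ (Filter.Eventually.of_forall fun w => by simp [Circle.norm_coe])
      exact (continuous_subtype_val.comp (Real.continuous_fourierChar.comp
        (continuous_id.inner continuous_const))).aestronglyMeasurable
    · refine (integrable_const (∫ w : EucSp, ‖g w‖)).congr ?_
      refine Filter.Eventually.of_forall fun x => ?_
      congr 1
      refine integral_congr_ae (Filter.Eventually.of_forall fun w => ?_)
      simp [norm_mul, Circle.norm_coe]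
  calc ∫ x, f x ∂μ = ∫ x, ∫ w : EucSp, ((𝐞 ⟪w, x⟫ : Circle) : ℂ) * g w ∂volume ∂μ := by
        exact integral_congr_ae (Filter.Eventually.of_forall fun x => hinv x)
    _ = ∫ w : EucSp, ∫ x, ((𝐞 ⟪w, x⟫ : Circle) : ℂ) * g w ∂μ ∂volume :=
        integral_integral_swap (hint μ inferInstance)
    _ = ∫ w : EucSp, (∫ x, ((𝐞 ⟪w, x⟫ : Circle) : ℂ) ∂μ) * g w ∂volume := by
        refine integral_congr_ae (Filter.Eventually.of_forall fun w => ?_)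
        simpa using integral_smul_const (μ := μ) (fun x : EucSp => ((𝐞 ⟪w, x⟫ : Circle) : ℂ)) (g w)
    _ = ∫ w : EucSp, (∫ x, ((𝐞 ⟪w, x⟫ : Circle) : ℂ) ∂ν) * g w ∂volume := by
        refine integral_congr_ae (Filter.Eventually.of_forall fun w => ?_)
        simp only [hchar]
    _ = ∫ w : EucSp, ∫ x, ((𝐞 ⟪w, x⟫ : Circle) : ℂ) * g w ∂ν ∂volume := by
        refine integral_congr_ae (Filter.Eventually.of_forall fun w => ?_)
        simpa using (integral_smul_const (μ := ν) (fun x : EucSp => ((𝐞 ⟪w, x⟫ : Circle) : ℂ)) (g w)).symm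
    _ = ∫ x, ∫ w : EucSp, ((𝐞 ⟪w, x⟫ : Circle) : ℂ) * g w ∂volume ∂ν :=
        (integral_integral_swap (hint ν inferInstance)).symm
    _ = ∫ x, f x ∂ν := integral_congr_ae (Filter.Eventually.of_forall fun x => (hinv x).symm)


lemma integral_smooth_eq (μ ν : Measure EucSp) [IsFiniteMeasure μ] [IsFiniteMeasure ν]
    (hS : ∀ f : 𝓢(EucSp, ℂ), ∫ x, f x ∂μ = ∫ x, f x ∂ν)
    (f : EucSp → ℝ) (hsm : ContDiff ℝ ∞ f) (hsupp : HasCompactSupport f) :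
    ∫ x, f x ∂μ = ∫ x, f x ∂ν := by
  have hsmC : ContDiff ℝ ∞ (fun x : EucSp => (f x : ℂ)) := Complex.ofRealCLM.contDiff.comp hsm
  have hsuppC : HasCompactSupport (fun x : EucSp => (f x : ℂ)) :=
    hsupp.comp_left (g := fun t : ℝ => (t : ℂ)) Complex.ofReal_zero
  have := hS (toSchwartz (fun x : EucSp => (f x : ℂ)) hsmC hsuppC)
  have h2 : ∫ x, (f x : ℂ) ∂μ = ∫ x, (f x : ℂ) ∂ν := this
  have hμ : ∫ x, ((f x : ℝ) : ℂ) ∂μ = ((∫ x, f x ∂μ : ℝ) : ℂ) := integral_ofReal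
  have hν : ∫ x, ((f x : ℝ) : ℂ) ∂ν = ((∫ x, f x ∂ν : ℝ) : ℂ) := integral_ofReal
  rw [hμ, hν] at h2
  exact_mod_cast h2

lemma measure_isOpen_eq (μ ν : Measure EucSp) [IsFiniteMeasure μ] [IsFiniteMeasure ν]
    (hS : ∀ f : EucSp → ℝ, ContDiff ℝ ∞ f → HasCompactSupport f → ∫ x, f x ∂μ = ∫ x, f x ∂ν)
    (U : Set EucSp) (hU : IsOpen U) (hUb : Bornology.IsBounded U) : μ U = ν U := by
  obtain ⟨f, hfsupp, hfsm, hfr⟩ := hU.exists_contDiff_support_eq (n := ⊤)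
  set F : ℕ → EucSp → ℝ := fun m x => 1 - (1 - f x) ^ m with hF
  have hf01 : ∀ x, f x ∈ Set.Icc (0:ℝ) 1 := fun x => hfr ⟨x, rfl⟩
  have hFsm : ∀ m, ContDiff ℝ ∞ (F m) := fun m =>
    contDiff_const.sub ((contDiff_const.sub hfsm).pow m)
  have hFsupp : ∀ m, HasCompactSupport (F m) := by
    intro m
    have hsub : Function.support (F m) ⊆ U := by
      intro x hx
      rw [← hfsupp]
      by_contra hfx
      have hz : f x = 0 := Function.notMem_support.mp hfx
      apply hx
      simp [hF, hz]
    refine HasCompactSupport.intro' (K := closure U) hUb.isCompact_closure isClosed_closure ?_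
    intro x hx
    by_contra hne
    exact hx (subset_closure (hsub hne))
  have hF01 : ∀ m x, F m x ∈ Set.Icc (0:ℝ) 1 := by
    intro m x
    obtain ⟨h0, h1⟩ := hf01 x
    constructor
    · simp only [hF, sub_nonneg]
      exact pow_le_one₀ (by linarith) (by linarith)
    · simp only [hF, sub_le_self_iff]
      exact pow_nonneg (by linarith) m
  have hlim : ∀ ρ : Measure EucSp, ∀ _ : IsFiniteMeasure ρ,
      Tendsto (fun m => ∫ x, F m x ∂ρ) atTop (𝓝 ((ρ U).toReal)) := by
    intro ρ hρ
    have : Tendsto (fun m => ∫ x, F m x ∂ρ) atTop (𝓝 (∫ x, U.indicator 1 x ∂ρ)) := by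
      refine tendsto_integral_of_dominated_convergence (fun _ => 1) ?_ ?_ ?_ ?_
      · exact fun m => ((hFsm m).continuous).aestronglyMeasurable
      · exact integrable_const 1
      · intro m
        refine Filter.Eventually.of_forall fun x => ?_
        obtain ⟨h0, h1⟩ := hF01 m x
        show ‖F m x‖ ≤ 1
        rw [Real.norm_eq_abs, abs_le]
        constructor <;> linarith
      · refine Filter.Eventually.of_forall fun x => ?_
        by_cases hx : x ∈ U
        · have hfx : 0 < f x := by
            rcases lt_or_eq_of_le (hf01 x).1 with h | h
            · exact h
            · exfalso
              rw [← hfsupp] at hx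
              exact hx h.symm
          have : Tendsto (fun m => (1 - f x) ^ m) atTop (𝓝 0) :=
            tendsto_pow_atTop_nhds_zero_of_lt_one (by linarith [(hf01 x).2]) (by linarith)
          have := this.const_sub 1
          simpa [hF, Set.indicator_of_mem hx] using this
        · have hfx : f x = 0 := by
            rw [← hfsupp] at hx
            exact Function.notMem_support.mp hx
          simp [hF, hfx, Set.indicator_of_notMem hx]
    rwa [integral_indicator_one hU.measurableSet] at this
  have heq : ∀ m, ∫ x, F m x ∂μ = ∫ x, F m x ∂ν := fun m => hS (F m) (hFsm m) (hFsupp m)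
  have := tendsto_nhds_unique ((hlim μ inferInstance).congr (fun m => heq m)) (hlim ν inferInstance)
  exact ((ENNReal.toReal_eq_toReal_iff' (measure_ne_top μ U) (measure_ne_top ν U)).mp this)

theorem cramerWold (μ ν : Measure EucSp) [IsProbabilityMeasure μ] [IsProbabilityMeasure ν]
    (hproj : ∀ θ : EucSp, Measure.map (fun x => ⟪x, θ⟫) μ = Measure.map (fun x => ⟪x, θ⟫) ν) :
    μ = ν := by
  have hchar : ∀ w : EucSp, ∫ x, ((𝐞 ⟪w, x⟫ : Circle) : ℂ) ∂μ = ∫ x, ((𝐞 ⟪w, x⟫ : Circle) : ℂ) ∂ν := by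
    intro w
    have hgsm : ∀ ρ : Measure ℝ, AEStronglyMeasurable (fun t : ℝ => ((𝐞 t : Circle) : ℂ)) ρ :=
      fun ρ => (continuous_subtype_val.comp Real.continuous_fourierChar).aestronglyMeasurable
    have hmμ : AEMeasurable (fun x : EucSp => ⟪x, w⟫) μ :=
      (continuous_id.inner continuous_const).aemeasurable
    have hmν : AEMeasurable (fun x : EucSp => ⟪x, w⟫) ν :=
      (continuous_id.inner continuous_const).aemeasurable
    calc ∫ x, ((𝐞 ⟪w, x⟫ : Circle) : ℂ) ∂μ = ∫ x, ((𝐞 ⟪x, w⟫ : Circle) : ℂ) ∂μ :=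
          integral_congr_ae (Filter.Eventually.of_forall fun x => by
            show ((𝐞 ⟪w, x⟫ : Circle) : ℂ) = ((𝐞 ⟪x, w⟫ : Circle) : ℂ)
            rw [real_inner_comm])
      _ = ∫ t : ℝ, ((𝐞 t : Circle) : ℂ) ∂(Measure.map (fun x : EucSp => ⟪x, w⟫) μ) :=
          (integral_map hmμ (hgsm _)).symm
      _ = ∫ t : ℝ, ((𝐞 t : Circle) : ℂ) ∂(Measure.map (fun x : EucSp => ⟪x, w⟫) ν) := by rw [hproj w]
      _ = ∫ x, ((𝐞 ⟪x, w⟫ : Circle) : ℂ) ∂ν := integral_map hmν (hgsm _)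
      _ = ∫ x, ((𝐞 ⟪w, x⟫ : Circle) : ℂ) ∂ν :=
          integral_congr_ae (Filter.Eventually.of_forall fun x => by
            show ((𝐞 ⟪x, w⟫ : Circle) : ℂ) = ((𝐞 ⟪w, x⟫ : Circle) : ℂ)
            rw [real_inner_comm])
  have hSch := integral_schwartz_eq μ ν hchar
  have hsm := integral_smooth_eq μ ν hSch
  have hob := measure_isOpen_eq μ ν hsm
  have hopen : ∀ U : Set EucSp, IsOpen U → μ U = ν U := by
    intro U hU
    have hmono : Monotone (fun m : ℕ => U ∩ Metric.ball (0 : EucSp) m) := by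
      intro a b hab
      exact Set.inter_subset_inter_right _ (Metric.ball_subset_ball (by exact_mod_cast hab))
    have hunion : (⋃ m : ℕ, U ∩ Metric.ball (0 : EucSp) m) = U := by
      rw [← Set.inter_iUnion]
      refine Set.inter_eq_self_of_subset_left fun x _ => ?_
      obtain ⟨m, hm⟩ := exists_nat_gt ‖x‖
      exact Set.mem_iUnion.mpr ⟨m, by simpa using hm⟩
    have h1 := tendsto_measure_iUnion_atTop (μ := μ) hmono
    have h2 := tendsto_measure_iUnion_atTop (μ := ν) hmono
    rw [hunion] at h1 h2
    refine tendsto_nhds_unique (h1.congr fun m => ?_) h2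
    exact hob _ (hU.inter Metric.isOpen_ball) (Metric.isBounded_ball.subset
      Set.inter_subset_right)
  refine ext_of_generate_finite {s : Set EucSp | IsOpen s} ?_ ?_ (fun s hs => hopen s hs) ?_
  · exact BorelSpace.measurable_eq
  · intro u hu v hv _
    rw [Set.mem_setOf_eq] at *
    exact hu.inter hv
  · simp

end CramerWold

lemma sphere_sum_sq {d : ℕ} {s : EuclideanSpace ℝ (Fin (d + 1))} (hs : ‖s‖ = 1) :
    (∑ i : Fin d, s (Fin.castSucc i) ^ 2) + s (Fin.last d) ^ 2 = 1 := by
  have h := EuclideanSpace.norm_eq s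
  rw [hs] at h
  have h2 : ∑ i, ‖s i‖ ^ 2 = 1 := by
    have h3 : (0:ℝ) ≤ ∑ i, ‖s i‖ ^ 2 := Finset.sum_nonneg fun i _ => sq_nonneg _
    nlinarith [Real.sq_sqrt h3]
  rw [Fin.sum_univ_castSucc] at h2
  simpa [Real.norm_eq_abs, sq_abs] using h2

lemma ne_northPole_last_lt_one {d : ℕ} {s : EuclideanSpace ℝ (Fin (d + 1))}
    (hs : ‖s‖ = 1) (hn : s ≠ northPole d) : s (Fin.last d) < 1 := by
  have hsum := sphere_sum_sq hs
  have hrest : 0 ≤ ∑ i : Fin d, s (Fin.castSucc i) ^ 2 :=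
    Finset.sum_nonneg fun i _ => sq_nonneg _
  have hle : s (Fin.last d) ≤ 1 := by nlinarith
  refine lt_of_le_of_ne hle fun heq => hn ?_
  have hz : ∑ i : Fin d, s (Fin.castSucc i) ^ 2 = 0 := by rw [heq] at hsum; linarith
  have hzero : ∀ i : Fin d, s (Fin.castSucc i) = 0 := by
    intro i
    have h4 := (Finset.sum_eq_zero_iff_of_nonneg (fun j _ => sq_nonneg (s (Fin.castSucc j)))).mp hz
      i (Finset.mem_univ i)
    exact pow_eq_zero_iff two_ne_zero |>.mp h4
  ext i
  induction i using Fin.lastCases with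
  | last => simp [northPole, EuclideanSpace.single_apply, heq]
  | cast j =>
    simp only [northPole, EuclideanSpace.single_apply, hzero j]
    rw [if_neg (Fin.castSucc_lt_last j).ne]

lemma stereo_injOn {d : ℕ} {s t : EuclideanSpace ℝ (Fin (d + 1))}
    (hs : ‖s‖ = 1) (hsn : s ≠ northPole d) (ht : ‖t‖ = 1) (htn : t ≠ northPole d)
    (hst : stereo s = stereo t) : s = t := by
  set a : ℝ := 1 - s (Fin.last d) with hadef
  set b : ℝ := 1 - t (Fin.last d) with hbdef
  have ha : 0 < a := by have := ne_northPole_last_lt_one hs hsn; simp [hadef]; linarith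
  have hb : 0 < b := by have := ne_northPole_last_lt_one ht htn; simp [hbdef]; linarith
  have hcoord : ∀ i : Fin d, a⁻¹ * s (Fin.castSucc i) = b⁻¹ * t (Fin.castSucc i) := by
    intro i
    have := congrFun (congrArg (fun (x : EuclideanSpace ℝ (Fin d)) => (x : Fin d → ℝ)) hst) i
    simpa [stereo, stereoProj, PiLp.smul_apply, smul_eq_mul] using this
  have hsc : ∀ i : Fin d, s (Fin.castSucc i) = a * b⁻¹ * t (Fin.castSucc i) := by
    intro i
    have h := hcoord i
    field_simp at h ⊢
    linarith [h]
  have hsum_s := sphere_sum_sq hs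
  have hsum_t := sphere_sum_sq ht
  have hsq : ∑ i : Fin d, s (Fin.castSucc i) ^ 2
      = (a * b⁻¹) ^ 2 * ∑ i : Fin d, t (Fin.castSucc i) ^ 2 := by
    rw [Finset.mul_sum]
    refine Finset.sum_congr rfl fun i _ => ?_
    rw [hsc i]; ring
  have hslast : s (Fin.last d) = 1 - a := by simp [hadef]
  have htlast : t (Fin.last d) = 1 - b := by simp [hbdef]
  rw [hslast] at hsum_s; rw [htlast] at hsum_t
  have hS : ∑ i : Fin d, s (Fin.castSucc i) ^ 2 = 2 * a - a ^ 2 := by linarith [hsum_s]; 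
  have hT : ∑ i : Fin d, t (Fin.castSucc i) ^ 2 = 2 * b - b ^ 2 := by linarith [hsum_t]
  rw [hS, hT] at hsq
  have hab : a = b := by
    have hb' : b ≠ 0 := hb.ne'
    field_simp at hsq
    nlinarith [mul_pos ha hb, sq_nonneg (a - b)]
  have hlast_eq : s (Fin.last d) = t (Fin.last d) := by rw [hslast, htlast, hab]
  ext i
  induction i using Fin.lastCases with
  | last => exact hlast_eq
  | cast j =>
    have h := hcoord j
    rw [hab] at h
    exact mul_left_cancel₀ (inv_ne_zero hb.ne') h

lemma stereo_measurable {d : ℕ} : Measurable (stereo (d := d)) := by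
  unfold stereo stereoProj
  refine Measurable.smul (M := ℝ) ?_ ((PiLp.continuous_toLp 2 (fun _ : Fin d => ℝ)).measurable.comp (measurable_pi_lambda _ fun i => (EuclideanSpace.proj (Fin.castSucc i)).continuous.measurable))
  have h1 : Measurable fun s : EuclideanSpace ℝ (Fin (d+1)) => (1 - s (Fin.last d))⁻¹ :=
    (measurable_const.sub (EuclideanSpace.proj (Fin.last d)).continuous.measurable).inv
  exact h1

lemma stereoExt_measurable {d : ℕ} : Measurable (stereoExt (d := d)) := by
  unfold stereoExt
  exact Measurable.ite measurableSet_eq measurable_const stereo_measurable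

lemma stereo_continuousOn {d : ℕ} :
    ContinuousOn (stereo (d := d)) {x | x (Fin.last d) ≠ 1} := by
  unfold stereo
  refine ContinuousOn.smul (f := fun x : EuclideanSpace ℝ (Fin (d+1)) => (1 - x (Fin.last d))⁻¹) (g := fun x => stereoProj x) ?_ ?_
  · refine (continuousOn_const.sub
      (EuclideanSpace.proj (Fin.last d)).continuous.continuousOn).inv₀ ?_
    exact fun x hx => sub_ne_zero.mpr fun he => hx he.symm
  · exact ((PiLp.continuous_toLp 2 _).comp (continuous_pi fun i =>
      (EuclideanSpace.proj (Fin.castSucc i)).continuous)).continuousOn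


/-- let `h : ℝ^d → ℝ^{d'}` be continuous and injective, and let `μ, ν` be
Borel probability measures on the unit sphere `𝕊^d ⊂ ℝ^{d+1}` giving no mass to the
north pole. If for every unit vector `θ ∈ ℝ^{d'}` the pushforwards of `μ` and `ν` under
`s ↦ ⟨h(φ(s)), θ⟩` coincide, then `μ = ν`. -/
theorem stmt16 {d d' : ℕ} (hd : 1 ≤ d) (hd' : 1 ≤ d')
    (h : EuclideanSpace ℝ (Fin d) → EuclideanSpace ℝ (Fin d'))
    (hcont : Continuous h) (hinj : Function.Injective h)
    (μ ν : Measure (EuclideanSpace ℝ (Fin (d + 1))))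
    [IsProbabilityMeasure μ] [IsProbabilityMeasure ν]
    (hμsph : μ (Metric.sphere (0 : EuclideanSpace ℝ (Fin (d + 1))) 1)ᶜ = 0)
    (hνsph : ν (Metric.sphere (0 : EuclideanSpace ℝ (Fin (d + 1))) 1)ᶜ = 0)
    (hμn : μ {northPole d} = 0) (hνn : ν {northPole d} = 0)
    (hslices : ∀ θ : EuclideanSpace ℝ (Fin d'), ‖θ‖ = 1 →
      Measure.map (fun s => ⟪h (stereoExt s), θ⟫) μ =
        Measure.map (fun s => ⟪h (stereoExt s), θ⟫) ν) :
    μ = ν := by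
  have hFmeas : Measurable (fun s => h (stereoExt s)) := hcont.measurable.comp stereoExt_measurable
  haveI : IsProbabilityMeasure (Measure.map (fun s => h (stereoExt s)) μ) :=
    Measure.isProbabilityMeasure_map hFmeas.aemeasurable
  haveI : IsProbabilityMeasure (Measure.map (fun s => h (stereoExt s)) ν) :=
    Measure.isProbabilityMeasure_map hFmeas.aemeasurable
  -- all slices, not only unit ones
  have hslices' : ∀ θ : EuclideanSpace ℝ (Fin d'),
      Measure.map (fun s => ⟪h (stereoExt s), θ⟫) μ =
        Measure.map (fun s => ⟪h (stereoExt s), θ⟫) ν := by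
    intro θ
    by_cases hθ : θ = 0
    · subst hθ
      have hzero : (fun s : EuclideanSpace ℝ (Fin (d+1)) => ⟪h (stereoExt s), (0 : EuclideanSpace ℝ (Fin d'))⟫)
          = fun _ => (0 : ℝ) := funext fun s => inner_zero_right _
      rw [hzero, Measure.map_const, Measure.map_const, measure_univ, measure_univ]
    · set u : EuclideanSpace ℝ (Fin d') := ‖θ‖⁻¹ • θ with hu
      have hunorm : ‖u‖ = 1 := norm_smul_inv_norm hθ
      have hsl_meas : Measurable fun s => ⟪h (stereoExt s), u⟫ :=
        ((continuous_id.inner continuous_const).measurable).comp hFmeas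
      have hfun : (fun s => ⟪h (stereoExt s), θ⟫)
          = (fun t : ℝ => ‖θ‖ * t) ∘ (fun s => ⟪h (stereoExt s), u⟫) := by
        funext s
        show ⟪h (stereoExt s), θ⟫ = ‖θ‖ * ⟪h (stereoExt s), ‖θ‖⁻¹ • θ⟫
        rw [real_inner_smul_right]
        have : ‖θ‖ ≠ 0 := norm_ne_zero_iff.mpr hθ
        field_simp
      rw [hfun, ← Measure.map_map (measurable_const_mul ‖θ‖) hsl_meas,
        ← Measure.map_map (measurable_const_mul ‖θ‖) hsl_meas, hslices u hunorm]
  have hproj : ∀ θ : EuclideanSpace ℝ (Fin d'),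
      Measure.map (fun x => ⟪x, θ⟫) (Measure.map (fun s => h (stereoExt s)) μ)
        = Measure.map (fun x => ⟪x, θ⟫) (Measure.map (fun s => h (stereoExt s)) ν) := by
    intro θ
    have hgm : Measurable fun x : EuclideanSpace ℝ (Fin d') => ⟪x, θ⟫ :=
      (continuous_id.inner continuous_const).measurable
    rw [Measure.map_map hgm hFmeas, Measure.map_map hgm hFmeas]
    exact hslices' θ
  have key : Measure.map (fun s => h (stereoExt s)) μ = Measure.map (fun s => h (stereoExt s)) ν :=
    cramerWold _ _ hproj
  -- pull back
  set S := Metric.sphere (0 : EuclideanSpace ℝ (Fin (d+1))) 1 \ {northPole d} with hSdef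
  have hSmeas : MeasurableSet S :=
    Metric.isClosed_sphere.measurableSet.diff (measurableSet_singleton _)
  have hcompl : ∀ ρ : Measure (EuclideanSpace ℝ (Fin (d+1))),
      ρ (Metric.sphere (0 : EuclideanSpace ℝ (Fin (d + 1))) 1)ᶜ = 0 → ρ {northPole d} = 0 →
      ρ Sᶜ = 0 := by
    intro ρ h1 h2
    refine measure_mono_null ?_ (measure_union_null h1 h2)
    intro x hx
    by_cases hxs : x ∈ Metric.sphere (0 : EuclideanSpace ℝ (Fin (d+1))) 1
    · right
      by_contra hxn
      exact hx ⟨hxs, hxn⟩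
    · exact Or.inl hxs
  have hμS := hcompl μ hμsph hμn
  have hνS := hcompl ν hνsph hνn
  have hSsub : S ⊆ {x : EuclideanSpace ℝ (Fin (d+1)) | x (Fin.last d) ≠ 1} := by
    intro x hx
    have hxn : x ≠ northPole d := fun he => hx.2 (Set.mem_singleton_iff.mpr he)
    have := ne_northPole_last_lt_one (mem_sphere_zero_iff_norm.mp hx.1) hxn
    exact this.ne
  have hEq : ∀ x ∈ S, stereoExt x = stereo x := by
    intro x hx
    unfold stereoExt
    rw [if_neg (fun he => hx.2 (Set.mem_singleton_iff.mpr he))]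
  have hconS : ContinuousOn (fun s => h (stereoExt s)) S := by
    refine hcont.comp_continuousOn ?_
    exact ((stereo_continuousOn.mono hSsub).congr hEq)
  have hinjS : Set.InjOn (fun s => h (stereoExt s)) S := by
    intro x hx y hy hxy
    have hx' : stereoExt x = stereo x := hEq x hx
    have hy' : stereoExt y = stereo y := hEq y hy
    refine stereo_injOn (mem_sphere_zero_iff_norm.mp hx.1)
      (fun he => hx.2 (Set.mem_singleton_iff.mpr he))
      (mem_sphere_zero_iff_norm.mp hy.1)
      (fun he => hy.2 (Set.mem_singleton_iff.mpr he)) ?_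
    rw [← hx', ← hy']
    exact hinj hxy
  refine Measure.ext fun A hA => ?_
  set B := (fun s => h (stereoExt s)) '' (A ∩ S) with hBdef
  have hBmeas : MeasurableSet B :=
    (hA.inter hSmeas).image_of_continuousOn_injOn
      (hconS.mono Set.inter_subset_right) (hinjS.mono Set.inter_subset_right)
  have hpre : (fun s => h (stereoExt s)) ⁻¹' B ∩ S = A ∩ S := by
    apply Set.Subset.antisymm
    · rintro x ⟨hxB, hxS⟩
      obtain ⟨y, hyAS, hyx⟩ := hxB
      exact (hinjS hyAS.2 hxS hyx) ▸ hyAS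
    · exact fun x hx => ⟨Set.mem_preimage.mpr (Set.mem_image_of_mem _ hx), hx.2⟩
  have hmapeq : μ ((fun s => h (stereoExt s)) ⁻¹' B) = ν ((fun s => h (stereoExt s)) ⁻¹' B) := by
    rw [← Measure.map_apply hFmeas hBmeas, ← Measure.map_apply hFmeas hBmeas, key]
  calc μ A = μ (A ∩ S) :=
        (measure_inter_conull' (measure_mono_null (fun x hx => hx.2) hμS)).symm
    _ = μ ((fun s => h (stereoExt s)) ⁻¹' B ∩ S) := by rw [hpre]
    _ = μ ((fun s => h (stereoExt s)) ⁻¹' B) :=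
        measure_inter_conull' (measure_mono_null (fun x hx => hx.2) hμS)
    _ = ν ((fun s => h (stereoExt s)) ⁻¹' B) := hmapeq
    _ = ν ((fun s => h (stereoExt s)) ⁻¹' B ∩ S) :=
        (measure_inter_conull' (measure_mono_null (fun x hx => hx.2) hνS)).symm
    _ = ν (A ∩ S) := by rw [hpre]
    _ = ν A := measure_inter_conull' (measure_mono_null (fun x hx => hx.2) hνS)
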